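/- Let V be a nonempty locally compact Hausdorff topological space, let v₀ ∈ V, and let G be a path-connected topological group. Let H_c denote the subgroup of C(V,G) consisting of those x that are equal to 1 outside some compact subset of V, and let N_c denote the set of x ∈ H_c for which there exist a compact set K ⊆ V with x = 1 on V∖K and a homotopy H : [0,1] × V → G with H(0,·) ≡ 1, H(1,·) = x, and H(t,v) = 1 for all t ∈ [0,1] and all v ∈ V∖K. If f : H_c → G is a group homomorphism such that f(x) = x(v₀) for every x ∈ N_c, then there exists a group homomorphism ψ : H_c → G with values in the center Z(G) of G such that ψ(x) = 1 for every x ∈ N_c and f(x) = ψ(x)·x(v₀) for every x ∈ H_c. -/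

import Mathlib

open ContinuousMap

/-- The subgroup of `C(V,G)` of maps equal to `1` outside some compact subset of `V`. -/
def compactlySupportedSubgroup (V G : Type*) [TopologicalSpace V] [TopologicalSpace G]
    [Group G] [IsTopologicalGroup G] : Subgroup C(V, G) where
  carrier := {x : C(V, G) | ∃ K : Set V, IsCompact K ∧ ∀ v ∉ K, x v = 1}
  one_mem' := ⟨∅, isCompact_empty, fun _ _ => rfl⟩
  mul_mem' := by
    rintro x y ⟨K, hK, hx⟩ ⟨L, hL, hy⟩
    exact ⟨K ∪ L, hK.union hL, fun v hv => by
      simp [hx v (fun h => hv (Or.inl h)), hy v (fun h => hv (Or.inr h))]⟩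
  inv_mem' := by
    rintro x ⟨K, hK, hx⟩
    exact ⟨K, hK, fun v hv => by simp [hx v hv]⟩

/-- The set of compactly supported maps that are null-homotopic through a homotopy that is
constantly `1` outside a compact set containing the support. -/
def compactlyNullHomotopic {V G : Type*} [TopologicalSpace V] [TopologicalSpace G]
    [Group G] [IsTopologicalGroup G] (x : C(V, G)) : Prop :=
  ∃ K : Set V, IsCompact K ∧ (∀ v ∉ K, x v = 1) ∧
    ContinuousMap.HomotopicRel (1 : C(V, G)) x Kᶜ

section Aux

variable {V G : Type*} [TopologicalSpace V] [TopologicalSpace G]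
    [Group G] [IsTopologicalGroup G]

/-- Conjugation by any continuous map preserves `compactlyNullHomotopic`. -/
lemma compactlyNullHomotopic_conj (x y : C(V, G)) (hy : compactlyNullHomotopic y) :
    compactlyNullHomotopic (x * y * x⁻¹) := by
  obtain ⟨K, hK, hy1, ⟨H⟩⟩ := hy
  refine ⟨K, hK, fun v hv => by simp [hy1 v hv], ⟨?_⟩⟩
  refine ⟨⟨⟨fun q => x q.2 * H q * (x q.2)⁻¹, by continuity⟩, ?_, ?_⟩, ?_⟩
  · intro v; simp
  · intro v; simp
  · intro t v hv
    have h1 : H (t, v) = (1 : C(V, G)) v := H.eq_fst t hv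
    simp only [ContinuousMap.one_apply] at h1
    simp [h1]

/-- In a path-connected group over a nonempty locally compact Hausdorff space, every value
is attained at `v₀` by a compactly null-homotopic map. -/
lemma exists_compactlyNullHomotopic_eval {V G : Type*} [TopologicalSpace V]
    [LocallyCompactSpace V] [T2Space V] [TopologicalSpace G] [Group G]
    [IsTopologicalGroup G] [PathConnectedSpace G] (v₀ : V) (g : G) :
    ∃ y : C(V, G), compactlyNullHomotopic y ∧ y v₀ = g := by
  obtain ⟨φ, hφ1, -, hφc, hφm⟩ :=
    exists_continuous_one_zero_of_isCompact (isCompact_singleton (x := v₀))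
      isClosed_empty (Set.disjoint_empty _)
  obtain ⟨p⟩ := PathConnectedSpace.joined (1 : G) g
  have hmem : ∀ (t : unitInterval) (v : V), t.1 * φ v ∈ unitInterval := by
    intro t v
    exact ⟨mul_nonneg t.2.1 (hφm v).1, mul_le_one₀ t.2.2 (hφm v).1 (hφm v).2⟩
  set y : C(V, G) := ⟨fun v => p ⟨φ v, hφm v⟩,
    p.continuous.comp (Continuous.subtype_mk φ.continuous _)⟩ with hy
  have hout : ∀ v ∉ tsupport φ, φ v = 0 := fun v hv => image_eq_zero_of_notMem_tsupport hv
  refine ⟨y, ⟨tsupport φ, hφc, ?_, ⟨?_⟩⟩, ?_⟩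
  · intro v hv
    have : φ v = 0 := hout v hv
    simp only [hy, ContinuousMap.coe_mk, this]
    have : (⟨(0:ℝ), by norm_num⟩ : unitInterval) = 0 := rfl
    rw [this, p.source]
  · refine ⟨⟨⟨fun q => p ⟨q.1.1 * φ q.2, hmem q.1 q.2⟩, ?_⟩, ?_, ?_⟩, ?_⟩
    · exact p.continuous.comp (Continuous.subtype_mk
        ((continuous_subtype_val.comp continuous_fst).mul (φ.continuous.comp continuous_snd)) _)
    · intro v
      have : (⟨(0:unitInterval).1 * φ v, hmem 0 v⟩ : unitInterval) = 0 := by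
        ext; simp
      simp only [ContinuousMap.coe_mk, this, p.source, ContinuousMap.one_apply]
    · intro v
      have : (⟨(1:unitInterval).1 * φ v, hmem 1 v⟩ : unitInterval)
          = ⟨φ v, hφm v⟩ := by ext; simp
      simp only [ContinuousMap.coe_mk, this, hy]
    · intro t v hv
      have h0 : φ v = 0 := hout v hv
      have : (⟨t.1 * φ v, hmem t v⟩ : unitInterval) = 0 := by ext; simp [h0]
      simp only [ContinuousMap.coe_mk, this, p.source, ContinuousMap.one_apply]
  · simp only [hy, ContinuousMap.coe_mk]
    have : (⟨φ v₀, hφm v₀⟩ : unitInterval) = 1 := by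
      ext; simpa using hφ1 rfl
    rw [this, p.target]

end Aux

lemma mem_of_compactlyNullHomotopic {V G : Type*} [TopologicalSpace V] [TopologicalSpace G]
    [Group G] [IsTopologicalGroup G] {y : C(V, G)} (hy : compactlyNullHomotopic y) :
    y ∈ compactlySupportedSubgroup V G := by
  obtain ⟨K, hK, h1, -⟩ := hy
  exact ⟨K, hK, h1⟩

/-- Let `V` be a nonempty locally compact Hausdorff space, `v₀ ∈ V`, `G` a
path-connected topological group, `H_c` the subgroup of compactly supported maps and `N_c` the
compactly null-homotopic ones.  If `f : H_c → G` is a group homomorphism with `f x = x v₀`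
on `N_c`, then there is a central-valued group homomorphism `ψ : H_c → G`, trivial on `N_c`,
with `f x = ψ x * x v₀`. -/
theorem rangeDecreasing_representation_compactSupport {V G : Type*} [TopologicalSpace V]
    [Nonempty V] [LocallyCompactSpace V] [T2Space V]
    [TopologicalSpace G] [Group G] [IsTopologicalGroup G] [PathConnectedSpace G]
    (v₀ : V) (f : (compactlySupportedSubgroup V G) →* G)
    (hf : ∀ x : compactlySupportedSubgroup V G,
      compactlyNullHomotopic (x : C(V, G)) → f x = (x : C(V, G)) v₀) :
    ∃ ψ : (compactlySupportedSubgroup V G) →* G,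
      (∀ x : compactlySupportedSubgroup V G, ψ x ∈ Subgroup.center G) ∧
      (∀ x : compactlySupportedSubgroup V G,
        compactlyNullHomotopic (x : C(V, G)) → ψ x = 1) ∧
      ∀ x : compactlySupportedSubgroup V G, f x = ψ x * (x : C(V, G)) v₀ := by
  classical
  -- the candidate map
  set ψ₀ : compactlySupportedSubgroup V G → G :=
    fun x => f x * ((x : C(V, G)) v₀)⁻¹ with hψ₀
  -- `(f x)⁻¹ * x v₀` is central
  have key : ∀ x : compactlySupportedSubgroup V G,
      (f x)⁻¹ * ((x : C(V, G)) v₀) ∈ Subgroup.center G := by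
    intro x
    rw [Subgroup.mem_center_iff]
    intro g
    obtain ⟨y, hyN, hyv⟩ := exists_compactlyNullHomotopic_eval (G := G) v₀ g
    set Y : compactlySupportedSubgroup V G := ⟨y, mem_of_compactlyNullHomotopic hyN⟩ with hY
    have hconj : compactlyNullHomotopic
        (((x * Y * x⁻¹ : compactlySupportedSubgroup V G)) : C(V, G)) := by
      simpa using compactlyNullHomotopic_conj (x : C(V, G)) y hyN
    have h1 := hf _ hconj
    have h2 := hf Y hyN
    have e1 : f x * g * (f x)⁻¹
        = (x : C(V, G)) v₀ * g * ((x : C(V, G)) v₀)⁻¹ := by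
      have h3 : ((x * Y * x⁻¹ : compactlySupportedSubgroup V G) : C(V, G)) v₀
          = (x : C(V, G)) v₀ * g * ((x : C(V, G)) v₀)⁻¹ := by simp [hY, hyv]
      have := h1
      simp only [map_mul, map_inv, h2, h3] at this
      rw [← hyv]
      simpa [hY, hyv] using this
    -- from `a g a⁻¹ = b g b⁻¹` deduce `g (a⁻¹ b) = (a⁻¹ b) g`
    set a := f x
    set b := (x : C(V, G)) v₀
    have : a⁻¹ * (a * g * a⁻¹) * b = a⁻¹ * (b * g * b⁻¹) * b := by rw [e1]
    calc g * (a⁻¹ * b) = a⁻¹ * (a * g * a⁻¹) * b := by group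
      _ = a⁻¹ * (b * g * b⁻¹) * b := this
      _ = (a⁻¹ * b) * g := by group
  have key2 : ∀ x : compactlySupportedSubgroup V G, ψ₀ x ∈ Subgroup.center G := by
    intro x
    have h := (Subgroup.center G).inv_mem (key x)
    have hc := Subgroup.mem_center_iff.mp h (f x)
    have conj_eq : ψ₀ x = f x * ((f x)⁻¹ * (x : C(V, G)) v₀)⁻¹ * (f x)⁻¹ := by
      simp only [hψ₀]; group
    rw [conj_eq, hc]
    simpa using h
  refine ⟨{ toFun := ψ₀, map_one' := by simp [hψ₀], map_mul' := ?_ }, key2, ?_, ?_⟩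
  · intro x y
    have hcomm := Subgroup.mem_center_iff.mp (key2 y)
    simp only [hψ₀, map_mul, Subgroup.coe_mul, ContinuousMap.mul_apply, mul_inv_rev]
    calc f x * f y * (((y : C(V, G)) v₀)⁻¹ * ((x : C(V, G)) v₀)⁻¹)
        = f x * ((f y * ((y : C(V, G)) v₀)⁻¹) * ((x : C(V, G)) v₀)⁻¹) := by group
      _ = f x * (((x : C(V, G)) v₀)⁻¹ * (f y * ((y : C(V, G)) v₀)⁻¹)) := by
          rw [← hcomm]
      _ = f x * ((x : C(V, G)) v₀)⁻¹ * (f y * ((y : C(V, G)) v₀)⁻¹) := by group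
  · intro x hx
    simp only [MonoidHom.coe_mk, OneHom.coe_mk, hψ₀, hf x hx, mul_inv_cancel]
  · intro x
    simp only [MonoidHom.coe_mk, OneHom.coe_mk, hψ₀]
    group
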